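/- Let y ∈ ℝ^N and let J be the set of its s largest-magnitude coordinates. Among all subsets J₀ ⊆ J whose coordinates are comparable (|y(i)| ≤ 2|y(j)| for all i, j ∈ J₀), there exists one with energy ‖y|_{J₀}‖₂² ≥ ‖y|_J‖₂² / (2.5 ⌈log₂ s⌉ + 1), provided s ≥ 2. (I.e., partitioning J into dyadic magnitude bands, one band captures at least a 1/O(log s) fraction of the energy.) -/

import Mathlib

open Finset

/-- The ℓ₂ norm on ℝ^N. -/
noncomputable def l2 {N : ℕ} (v : Fin N → ℝ) : ℝ := Real.sqrt (∑ i, v i ^ 2)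

/-- The ℓ₁ norm on ℝ^N. -/
def l1 {N : ℕ} (v : Fin N → ℝ) : ℝ := ∑ i, |v i|

/-- A vector is `s`-sparse if it has at most `s` nonzero coordinates. -/
def Sparse {N : ℕ} (s : ℕ) (v : Fin N → ℝ) : Prop :=
  (Finset.univ.filter fun j => v j ≠ 0).card ≤ s

/-- Restricted isometry condition with parameters (n, δ). -/
def RIC {m N : ℕ} (Φ : Matrix (Fin m) (Fin N) ℝ) (n : ℕ) (δ : ℝ) : Prop :=
  ∀ v : Fin N → ℝ, Sparse n v →
    (1 - δ) * l2 v ≤ l2 (Φ.mulVec v) ∧ l2 (Φ.mulVec v) ≤ (1 + δ) * l2 v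

/-- Squared-form restricted isometry condition with parameters (n, δ). -/
def RICsq {m N : ℕ} (Φ : Matrix (Fin m) (Fin N) ℝ) (n : ℕ) (δ : ℝ) : Prop :=
  ∀ v : Fin N → ℝ, Sparse n v →
    (1 - δ) * (l2 v) ^ 2 ≤ (l2 (Φ.mulVec v)) ^ 2 ∧
    (l2 (Φ.mulVec v)) ^ 2 ≤ (1 + δ) * (l2 v) ^ 2

/-- `xs` is the vector keeping the `s` largest-magnitude coordinates of `x`
(other coordinates set to 0). -/
def IsLargest {N : ℕ} (s : ℕ) (x xs : Fin N → ℝ) : Prop :=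
  ∃ T : Finset (Fin N), T.card = min s N ∧
    (∀ i, xs i = if i ∈ T then x i else 0) ∧
    ∀ i ∈ T, ∀ j ∉ T, |x j| ≤ |x i|

theorem regularization_band {N s : ℕ} (y : Fin N → ℝ) (J : Finset (Fin N))
    (hs : 2 ≤ s) (hJcard : J.card = min s N)
    (hJ : ∀ i ∈ J, ∀ j ∉ J, |y j| ≤ |y i|) :
    ∃ J₀ ⊆ J, (∀ i ∈ J₀, ∀ j ∈ J₀, |y i| ≤ 2 * |y j|) ∧
      (∑ i ∈ J, y i ^ 2) / (2.5 * (Nat.clog 2 s : ℝ) + 1) ≤ ∑ i ∈ J₀, y i ^ 2 := by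

  set K := Nat.clog 2 s with hKdef
  have hK1 : 1 ≤ K := Nat.clog_pos one_lt_two hs
  have hsK : s ≤ 2 ^ K := Nat.le_pow_clog one_lt_two s
  have hDpos : (0:ℝ) < 2.5 * (K:ℝ) + 1 := by positivity
  by_cases hz : ∀ i ∈ J, y i = 0
  · refine ⟨∅, empty_subset _, by simp, ?_⟩
    have h0 : ∑ i ∈ J, y i ^ 2 = 0 :=
      Finset.sum_eq_zero fun i hi => by rw [hz i hi]; ring
    simp [h0]
  push_neg at hz
  obtain ⟨i₁, hi₁J, hi₁⟩ := hz
  obtain ⟨i₀, hi₀J, hi₀⟩ := J.exists_max_image (fun i => |y i|) ⟨i₁, hi₁J⟩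
  set M := |y i₀| with hMdef
  have hMpos : 0 < M := lt_of_lt_of_le (abs_pos.mpr hi₁) (hi₀ i₁ hi₁J)
  set B : ℕ → Finset (Fin N) :=
    fun k => J.filter (fun i => M / 2 ^ (k+1) < |y i| ∧ |y i| ≤ M / 2 ^ k) with hBdef
  set L : ℕ → Finset (Fin N) := fun k => J.filter (fun i => |y i| ≤ M / 2 ^ k) with hLdef
  have hsplit : ∀ k : ℕ,
      ∑ i ∈ J, y i ^ 2 = (∑ j ∈ Finset.range k, ∑ i ∈ B j, y i ^ 2) + ∑ i ∈ L k, y i ^ 2 := by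
    intro k
    induction k with
    | zero =>
      have hL0 : L 0 = J := by
        apply Finset.filter_true_of_mem
        intro i hi
        simpa using hi₀ i hi
      simp [hL0]
    | succ k ih =>
      have hstep : ∑ i ∈ L k, y i ^ 2 = (∑ i ∈ B k, y i ^ 2) + ∑ i ∈ L (k+1), y i ^ 2 := by
        have hle : M / 2 ^ (k+1) ≤ M / 2 ^ k := by
          apply div_le_div_of_nonneg_left hMpos.le (by positivity)
          exact pow_le_pow_right₀ one_le_two (Nat.le_succ k)
        have h1 : (L k).filter (fun i => ¬ |y i| ≤ M / 2 ^ (k+1)) = B k := by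
          ext i
          simp only [hLdef, hBdef, Finset.mem_filter, not_le]
          constructor
          · rintro ⟨⟨hiJ, h2⟩, h3⟩; exact ⟨hiJ, h3, h2⟩
          · rintro ⟨hiJ, h3, h2⟩; exact ⟨⟨hiJ, h2⟩, h3⟩
        have h2 : (L k).filter (fun i => |y i| ≤ M / 2 ^ (k+1)) = L (k+1) := by
          ext i
          simp only [hLdef, Finset.mem_filter]
          constructor
          · rintro ⟨⟨hiJ, _⟩, h3⟩; exact ⟨hiJ, h3⟩
          · rintro ⟨hiJ, h3⟩; exact ⟨⟨hiJ, h3.trans hle⟩, h3⟩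
        rw [← Finset.sum_filter_add_sum_filter_not (L k) (fun i => |y i| ≤ M / 2 ^ (k+1)),
          h1, h2]
        ring
      rw [Finset.sum_range_succ, ih, hstep]
      ring
  obtain ⟨k₀, hk₀mem, hk₀⟩ := (Finset.range K).exists_max_image
    (fun k => ∑ i ∈ B k, y i ^ 2) ⟨0, Finset.mem_range.mpr hK1⟩
  set E := ∑ i ∈ B k₀, y i ^ 2 with hEdef
  have hi₀B : i₀ ∈ B 0 := by
    simp only [hBdef, Finset.mem_filter]
    refine ⟨hi₀J, ?_, ?_⟩
    · rw [← hMdef]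
      norm_num
      linarith
    · rw [← hMdef]; norm_num
  have hEM : M ^ 2 ≤ E := by
    have h1 : M ^ 2 ≤ ∑ i ∈ B 0, y i ^ 2 := by
      have := Finset.single_le_sum (f := fun i => y i ^ 2)
        (fun i _ => sq_nonneg (y i)) hi₀B
      calc M ^ 2 = y i₀ ^ 2 := by rw [hMdef, sq_abs]
        _ ≤ _ := this
    exact h1.trans (hk₀ 0 (Finset.mem_range.mpr hK1))
  have hEpos : 0 < E := lt_of_lt_of_le (by positivity) hEM
  -- bound the leftover
  have hLbound : ∑ i ∈ L K, y i ^ 2 ≤ (s:ℝ) * (M / 2 ^ K) ^ 2 := by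
    have h1 : ∑ i ∈ L K, y i ^ 2 ≤ (L K).card • ((M / 2 ^ K) ^ 2) := by
      apply Finset.sum_le_card_nsmul
      intro i hi
      simp only [hLdef, Finset.mem_filter] at hi
      calc y i ^ 2 = |y i| ^ 2 := (sq_abs _).symm
        _ ≤ (M / 2 ^ K) ^ 2 := by
            apply pow_le_pow_left₀ (abs_nonneg _) hi.2
    have hcard : (L K).card ≤ s := by
      calc (L K).card ≤ J.card := Finset.card_le_card (Finset.filter_subset _ _)
        _ = min s N := hJcard
        _ ≤ s := min_le_left _ _
    calc ∑ i ∈ L K, y i ^ 2 ≤ (L K).card • ((M / 2 ^ K) ^ 2) := h1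
      _ = ((L K).card : ℝ) * (M / 2 ^ K) ^ 2 := by rw [nsmul_eq_mul]
      _ ≤ (s:ℝ) * (M / 2 ^ K) ^ 2 := by
          apply mul_le_mul_of_nonneg_right _ (by positivity)
          exact_mod_cast hcard
  have h2s : (2 * s : ℝ) ≤ ((2:ℝ) ^ K) ^ 2 := by
    have : 2 * s ≤ 2 ^ K * 2 ^ K := Nat.mul_le_mul (hs.trans hsK) hsK
    have h' : (2 * s : ℕ) ≤ ((2:ℕ) ^ K) ^ 2 := by rw [sq]; exact this
    exact_mod_cast h'
  have hLE : ∑ i ∈ L K, y i ^ 2 ≤ E / 2 := by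
    have h3 : (s:ℝ) * (M / 2 ^ K) ^ 2 ≤ M ^ 2 / 2 := by
      rw [div_pow]
      rw [mul_div_assoc' ]
      rw [div_le_div_iff₀ (by positivity) (by norm_num)]
      nlinarith [sq_nonneg M, hMpos]
    linarith
  have hSsum : ∑ j ∈ Finset.range K, ∑ i ∈ B j, y i ^ 2 ≤ (K:ℝ) * E := by
    calc ∑ j ∈ Finset.range K, ∑ i ∈ B j, y i ^ 2
        ≤ (Finset.range K).card • E := Finset.sum_le_card_nsmul _ _ _ (fun j hj => hk₀ j hj)
      _ = (K:ℝ) * E := by rw [Finset.card_range, nsmul_eq_mul]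
  refine ⟨B k₀, Finset.filter_subset _ _, ?_, ?_⟩
  · intro i hi j hj
    simp only [hBdef, Finset.mem_filter] at hi hj
    have hkey : M / 2 ^ k₀ = 2 * (M / 2 ^ (k₀+1)) := by
      rw [pow_succ]
      field_simp
    have := hi.2.2
    rw [hkey] at this
    nlinarith [hj.2.1]
  · rw [div_le_iff₀ hDpos]
    have := hsplit K
    have hK1' : (1:ℝ) ≤ (K:ℝ) := by exact_mod_cast hK1
    nlinarith [hLE, hSsum, hEpos]
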